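/- Let G be a weighted undirected graph with nonnegative weights, M ⊆ V a skeleton set with the property that for any u,v with hop(u,v) ≥ h, some shortest u-v path has a node of M among its first h vertices and a node of M among its last h vertices. Let s be a source with representative r_s ∈ M satisfying d^h(r_s, s) = min over M ∩ N^h(s) of distance, and suppose d̃^S(v,w) is an (α,β)-approximation of d(v,w) for all v,w ∈ M. Then for any node u with hop(u,s) > η·h, the value d̃(u,s) := min{ d^{ηh}(u,s), min_{v' ∈ M ∩ N^h(u)} ( d^h(u,v') + d̃^S(v', r_s) + d^h(r_s,s) ) } satisfies d(u,s) ≤ d̃(u,s) ≤ (2α+1)·d(u,s) + β. -/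

import Mathlib

open scoped ENNReal

/-- Weight of a walk: sum of the weights of its edges. -/
noncomputable def walkWeight {V : Type} {G : SimpleGraph V} (w : Sym2 V → ℝ≥0∞)
    {a b : V} (p : G.Walk a b) : ℝ≥0∞ :=
  (p.edges.map w).sum

/-- Weighted shortest-path distance: infimum of walk weights (`⊤` if disconnected). -/
noncomputable def wdist {V : Type} (G : SimpleGraph V) (w : Sym2 V → ℝ≥0∞)
    (a b : V) : ℝ≥0∞ :=
  ⨅ p : G.Walk a b, walkWeight w p

/-- `h`-hop-limited weighted distance: infimum of weights over walks with at most
`h` edges (`⊤` if there is no such walk). -/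
noncomputable def hdist {V : Type} (G : SimpleGraph V) (w : Sym2 V → ℝ≥0∞)
    (h : ℕ) (a b : V) : ℝ≥0∞ :=
  ⨅ p : {p : G.Walk a b // p.length ≤ h}, walkWeight w p.1

namespace SimpleGraph.Walk
variable {V : Type} {G : SimpleGraph V}

/-- Prefix of a walk consisting of its first `n` darts. -/
def wtake : ∀ {u v : V} (p : G.Walk u v) (n : ℕ), G.Walk u (p.getVert n)
  | _, _, .nil, _ => .nil
  | _, _, .cons _ _, 0 => .nil
  | _, _, .cons h q, n+1 => .cons h (wtake q n)

/-- Suffix of a walk obtained by removing the first `n` darts. -/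
def wdrop : ∀ {u v : V} (p : G.Walk u v) (n : ℕ), G.Walk (p.getVert n) v
  | _, _, .nil, _ => .nil
  | _, _, .cons h q, 0 => .cons h q
  | _, _, .cons _ q, n+1 => wdrop q n

lemma edges_wtake : ∀ {u v : V} (p : G.Walk u v) (n : ℕ),
    (p.wtake n).edges = p.edges.take n
  | _, _, .nil, _ => by simp [wtake]
  | _, _, .cons _ _, 0 => by simp [wtake]; rfl
  | _, _, .cons h q, n+1 => by simp [wtake, edges_wtake q n]

lemma edges_wdrop : ∀ {u v : V} (p : G.Walk u v) (n : ℕ),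
    (p.wdrop n).edges = p.edges.drop n
  | _, _, .nil, _ => by simp [wdrop]
  | _, _, .cons _ _, 0 => by simp [wdrop]; rfl
  | _, _, .cons h q, n+1 => by simp [wdrop, edges_wdrop q n]

lemma length_wtake {u v : V} (p : G.Walk u v) (n : ℕ) :
    (p.wtake n).length ≤ n := by
  rw [← length_edges, edges_wtake]
  exact List.length_take.le.trans (min_le_left _ _)

lemma length_wdrop {u v : V} (p : G.Walk u v) (n : ℕ) :
    (p.wdrop n).length = p.length - n := by
  rw [← length_edges, edges_wdrop, List.length_drop, length_edges]

end SimpleGraph.Walk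

section helpers

variable {V : Type} {G : SimpleGraph V} (w : Sym2 V → ℝ≥0∞)

lemma wdist_le_walkWeight {a b : V} (p : G.Walk a b) :
    wdist G w a b ≤ walkWeight w p := iInf_le _ p

lemma hdist_le_walkWeight {h : ℕ} {a b : V} (p : G.Walk a b) (hp : p.length ≤ h) :
    hdist G w h a b ≤ walkWeight w p := iInf_le _ (⟨p, hp⟩ : {p : G.Walk a b // p.length ≤ h})

lemma wdist_le_hdist (h : ℕ) (a b : V) : wdist G w a b ≤ hdist G w h a b :=
  le_iInf fun p => iInf_le _ p.1

lemma walkWeight_reverse {a b : V} (p : G.Walk a b) :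
    walkWeight w p.reverse = walkWeight w p := by
  simp [walkWeight, SimpleGraph.Walk.edges_reverse, List.sum_reverse]

lemma wdist_comm (a b : V) : wdist G w a b = wdist G w b a := by
  have key : ∀ x y : V, wdist G w x y ≤ wdist G w y x := fun x y =>
    le_iInf fun p => (wdist_le_walkWeight w p.reverse).trans_eq (walkWeight_reverse w p)
  exact le_antisymm (key a b) (key b a)

lemma walkWeight_append {a b c : V} (p : G.Walk a b) (q : G.Walk b c) :
    walkWeight w (p.append q) = walkWeight w p + walkWeight w q := by
  simp [walkWeight, SimpleGraph.Walk.edges_append]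

lemma wdist_triangle (a b c : V) :
    wdist G w a c ≤ wdist G w a b + wdist G w b c := by
  have hsum : wdist G w a b + wdist G w b c
      = ⨅ p : G.Walk a b, ⨅ q : G.Walk b c, walkWeight w p + walkWeight w q := by
    rw [wdist, wdist, ENNReal.iInf_add]
    exact iInf_congr fun p => ENNReal.add_iInf
  rw [hsum]
  exact le_iInf fun p => le_iInf fun q =>
    (wdist_le_walkWeight w (p.append q)).trans_eq (walkWeight_append w p q)

lemma walkWeight_wtake_add_wdrop {a b : V} (p : G.Walk a b) (n : ℕ) :
    walkWeight w (p.wtake n) + walkWeight w (p.wdrop n) = walkWeight w p := by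
  rw [walkWeight, walkWeight, walkWeight, SimpleGraph.Walk.edges_wtake,
    SimpleGraph.Walk.edges_wdrop, ← List.sum_append, ← List.map_append, List.take_append_drop]

lemma walkWeight_wdrop_le {a b : V} (p : G.Walk a b) {m n : ℕ} (hmn : m ≤ n) :
    walkWeight w (p.wdrop n) ≤ walkWeight w (p.wdrop m) := by
  rw [walkWeight, walkWeight, SimpleGraph.Walk.edges_wdrop, SimpleGraph.Walk.edges_wdrop]
  calc ((p.edges.drop n).map w).sum
      = (((p.edges.drop m).drop (n - m)).map w).sum := by
        rw [List.drop_drop, Nat.add_sub_cancel' hmn]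
    _ ≤ (((p.edges.drop m).take (n - m)).map w).sum
        + (((p.edges.drop m).drop (n - m)).map w).sum := le_add_self
    _ = ((p.edges.drop m).map w).sum := by
        rw [← List.sum_append, ← List.map_append, List.take_append_drop]

end helpers

/-- weighted multi-source approximation step: with skeleton set `M`
(some weighted shortest path between nodes at hop distance ≥ h has a node of `M`
among its first `h` and among its last `h` vertices), a representative `r_s ∈ M`
within `h` hops of `s` minimizing `d^h(·,s)` over `M ∩ N^h(s)`, and an
`(α,β)`-approximation `d̃^S` of skeleton distances, for any node `u` with
`hop(u,s) > η·h` the estimate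
`d̃(u,s) = min( d^{ηh}(u,s), min_{v' ∈ M ∩ N^h(u)} d^h(u,v') + d̃^S(v',r_s) + d^h(r_s,s) )`
satisfies `d(u,s) ≤ d̃(u,s) ≤ (2α+1)·d(u,s) + β`. -/
theorem stmt_14 {V : Type} [Fintype V] (G : SimpleGraph V) (w : Sym2 V → ℝ≥0∞)
    (M : Set V) (h η : ℕ) (hh : 1 ≤ h) (hη : 1 ≤ η)
    (hskel : ∀ a b : V, h ≤ G.dist a b →
      ∃ p : G.Walk a b, walkWeight w p = wdist G w a b ∧
        (∃ k < h, p.getVert k ∈ M) ∧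
        (∃ k, k ≤ p.length ∧ p.length < k + h ∧ p.getVert k ∈ M))
    (α β : ℝ≥0∞) (hα : 1 ≤ α)
    (dS : V → V → ℝ≥0∞)
    (hdS : ∀ a ∈ M, ∀ b ∈ M, wdist G w a b ≤ dS a b ∧ dS a b ≤ α * wdist G w a b + β)
    (s rs : V)
    (hrsM : rs ∈ M) (hrsN : G.Reachable s rs ∧ G.dist s rs ≤ h)
    (hrsmin : ∀ v ∈ M, G.Reachable s v → G.dist s v ≤ h →
      hdist G w h rs s ≤ hdist G w h v s)
    (u : V) (hu : η * h < G.dist u s) :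
    let est : ℝ≥0∞ := min (hdist G w (η * h) u s)
      (⨅ v : {v : V // v ∈ M ∧ G.Reachable u v ∧ G.dist u v ≤ h},
        hdist G w h u v + dS v rs + hdist G w h rs s)
    wdist G w u s ≤ est ∧ est ≤ (2 * α + 1) * wdist G w u s + β := by
  intro est
  have hest : est = min (hdist G w (η * h) u s)
      (⨅ v : {v : V // v ∈ M ∧ G.Reachable u v ∧ G.dist u v ≤ h},
        hdist G w h u v + dS v rs + hdist G w h rs s) := rfl
  rw [hest]
  have hhs : h ≤ G.dist u s := le_trans (Nat.le_mul_of_pos_left h hη) hu.le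
  obtain ⟨p, hpw, ⟨k₁, hk₁, hk₁M⟩, ⟨k₂, hk₂le, hk₂lt, hk₂M⟩⟩ := hskel u s hhs
  constructor
  · -- lower bound
    refine le_min (wdist_le_hdist w _ u s) (le_iInf fun vv => ?_)
    obtain ⟨v, hvM, hvr, hvd⟩ := vv
    calc wdist G w u s ≤ wdist G w u v + wdist G w v s := wdist_triangle w u v s
      _ ≤ wdist G w u v + (wdist G w v rs + wdist G w rs s) := by
          gcongr; exact wdist_triangle w v rs s
      _ ≤ hdist G w h u v + (dS v rs + hdist G w h rs s) := by
          gcongr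
          · exact wdist_le_hdist w h u v
          · exact (hdS v hvM rs hrsM).1
          · exact wdist_le_hdist w h rs s
      _ = hdist G w h u v + dS v rs + hdist G w h rs s := by ring
  · -- upper bound
    set k := min k₁ k₂ with hk
    set v := p.getVert k with hv
    have hvM : v ∈ M := by
      rcases min_choice k₁ k₂ with hm | hm <;> rw [hv, hk, hm] <;> assumption
    have hkh : k < h := lt_of_le_of_lt (min_le_left _ _) hk₁
    set pt := p.wtake k with hpt
    set pd := p.wdrop k with hpd
    set ps := p.wdrop k₂ with hps
    have hreach : G.Reachable u v := pt.reachable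
    have hdistuv : G.dist u v ≤ h :=
      (SimpleGraph.dist_le pt).trans ((p.length_wtake k).trans hkh.le)
    have hpslen : ps.length ≤ h := by
      rw [hps, p.length_wdrop]; omega
    have hrsle : hdist G w h rs s ≤ walkWeight w ps := by
      refine le_trans (hrsmin _ hk₂M ?_ ?_) (hdist_le_walkWeight w ps hpslen)
      · exact ps.reverse.reachable
      · rw [SimpleGraph.dist_comm]
        exact (SimpleGraph.dist_le ps).trans hpslen
    have hsrs : wdist G w s rs ≤ walkWeight w ps :=
      (wdist_comm w s rs).trans_le ((wdist_le_hdist w h rs s).trans hrsle)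
    have hSD : walkWeight w ps ≤ walkWeight w pd :=
      walkWeight_wdrop_le w p (min_le_right k₁ k₂)
    have hPD : walkWeight w pt + walkWeight w pd = wdist G w u s := by
      rw [hpt, hpd, walkWeight_wtake_add_wdrop]; exact hpw
    have hDW : walkWeight w pd ≤ wdist G w u s := le_trans le_add_self hPD.le
    have h1 : hdist G w h u v ≤ walkWeight w pt :=
      hdist_le_walkWeight w pt ((p.length_wtake k).trans hkh.le)
    have h2 : dS v rs ≤ α * (walkWeight w pd + walkWeight w ps) + β := by
      refine (hdS v hvM rs hrsM).2.trans ?_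
      gcongr
      calc wdist G w v rs ≤ wdist G w v s + wdist G w s rs := wdist_triangle w v s rs
        _ ≤ walkWeight w pd + walkWeight w ps := by
            gcongr; exact wdist_le_walkWeight w pd
    have hfirst : min (hdist G w (η * h) u s)
        (⨅ v : {v : V // v ∈ M ∧ G.Reachable u v ∧ G.dist u v ≤ h},
          hdist G w h u v + dS v rs + hdist G w h rs s)
        ≤ hdist G w h u v + dS v rs + hdist G w h rs s :=
      (min_le_right _ _).trans (iInf_le _ (⟨v, hvM, hreach, hdistuv⟩ : {v : V // v ∈ M ∧ G.Reachable u v ∧ G.dist u v ≤ h}))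
    refine hfirst.trans ?_
    calc hdist G w h u v + dS v rs + hdist G w h rs s
        ≤ walkWeight w pt + (α * (walkWeight w pd + walkWeight w ps) + β)
          + walkWeight w ps := by gcongr
      _ ≤ walkWeight w pt + (α * (walkWeight w pd + walkWeight w pd) + β)
          + walkWeight w pd := by gcongr
      _ = (walkWeight w pt + walkWeight w pd) + 2 * α * walkWeight w pd + β := by ring
      _ ≤ wdist G w u s + 2 * α * wdist G w u s + β := by rw [hPD]; gcongr
      _ = (2 * α + 1) * wdist G w u s + β := by ring
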